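/- Let V be a finite linearly ordered vertex set, let M be a finite set of nonempty finite subsets of V forming an antichain under inclusion, and let K be the simplicial complex generated by M (all nonempty subsets of members of M), so that M is exactly the set of maximal simplices of K. Define the Simplex Array List digraph D as follows. Its node set is {(a, some b, m) : m ∈ M, a ∈ m, b ∈ m, a < b} ∪ {(a, none, m) : m ∈ M, a = max m}, and there is a directed edge from node (a, some b, m) to node (b, x, m′) whenever m′ = m and (b, x, m) is a node of D. Then: (i) for every directed path n₀ → n₁ → ⋯ → n_r in D, the first coordinates a₀, a₁, …, a_r are strictly increasing and the set {a₀, …, a_r} is a simplex of K; and (ii) for every nonempty simplex σ ∈ K there exists a directed path in D whose sequence of first coordinates is exactly the elements of σ listed in increasing order. -/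

import Mathlib

/-- The simplicial complex generated by the family `M` of maximal simplices:
all nonempty subsets of members of `M`. -/
def genComplex {V : Type*} [DecidableEq V] (M : Finset (Finset V)) : Set (Finset V) :=
  {σ | σ ≠ ∅ ∧ ∃ m ∈ M, σ ⊆ m}

/-- A node of the Simplex Array List: `(a, some b, m)` with `m ∈ M`, `a, b ∈ m`,
`a < b`, or `(a, none, m)` with `m ∈ M` and `a` the maximum of `m`. -/
def SALNode {V : Type*} [LinearOrder V] (M : Finset (Finset V))
    (p : V × Option V × Finset V) : Prop :=
  p.2.2 ∈ M ∧ p.1 ∈ p.2.2 ∧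
    match p.2.1 with
    | some b => b ∈ p.2.2 ∧ p.1 < b
    | none => ∀ x ∈ p.2.2, x ≤ p.1

/-- A directed edge of the Simplex Array List: from a node `(a, some b, m)` to a
node `(b, x, m)` (same maximal simplex `m`). -/
def SALEdge {V : Type*} [LinearOrder V] (M : Finset (Finset V))
    (p q : V × Option V × Finset V) : Prop :=
  SALNode M p ∧ SALNode M q ∧ p.2.1 = some q.1 ∧ q.2.2 = p.2.2

def mkL {V : Type*} (m : Finset V) (t : Option V) : List V → List (V × Option V × Finset V)
  | [] => []
  | [a] => [(a, t, m)]
  | a :: b :: l => (a, some b, m) :: mkL m t (b :: l)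

theorem mkL_map {V : Type*} (m : Finset V) (t : Option V) :
    ∀ l : List V, (mkL m t l).map Prod.fst = l
  | [] => rfl
  | [a] => rfl
  | a :: b :: l => by simp [mkL, mkL_map m t (b :: l)]

theorem mkL_node {V : Type*} [LinearOrder V] (M : Finset (Finset V)) (m : Finset V)
    (t : Option V) (hm : m ∈ M) :
    ∀ l : List V, l.Chain' (· < ·) → (∀ a ∈ l, a ∈ m) →
      (∀ a, l.getLast? = some a → SALNode M (a, t, m)) →
      ∀ p ∈ mkL m t l, SALNode M p
  | [], _, _, _ => by simp [mkL]
  | [a], _, _, hlast => by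
      simp only [mkL, List.mem_singleton]
      rintro p rfl
      exact hlast a rfl
  | a :: b :: l, hch, hmem, hlast => by
      simp only [mkL, List.mem_cons, forall_eq_or_imp]
      constructor
      · exact ⟨hm, hmem a (by simp), hmem b (by simp), (List.isChain_cons_cons.mp hch).1⟩
      · intro p hp
        exact mkL_node M m t hm (b :: l) (List.isChain_cons_cons.mp hch).2
          (fun x hx => hmem x (List.mem_cons_of_mem a hx))
          (fun x hx => hlast x (by simpa using hx)) p hp

theorem mkL_head {V : Type*} (m : Finset V) (t : Option V) (a : V) (l : List V) :
    ∃ x, (mkL m t (a :: l)).head? = some (a, x, m) := by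
  match l with
  | [] => exact ⟨t, rfl⟩
  | b :: l => exact ⟨some b, rfl⟩

theorem mkL_chain {V : Type*} [LinearOrder V] (M : Finset (Finset V)) (m : Finset V)
    (t : Option V) :
    ∀ l : List V, (∀ p ∈ mkL m t l, SALNode M p) → (mkL m t l).Chain' (SALEdge M)
  | [], _ => by simp [mkL, List.Chain']
  | [a], _ => by simp [mkL, List.Chain']
  | a :: b :: l, hnode => by
      rw [mkL, List.Chain', List.isChain_cons]
      refine ⟨?_, mkL_chain M m t (b :: l) (fun p hp => hnode p (by simp [mkL, hp]))⟩
      intro q hq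
      obtain ⟨x, hx⟩ := mkL_head m t b l
      rw [hx, Option.mem_some_iff] at hq
      subst hq
      refine ⟨hnode _ (by simp [mkL]), hnode _ ?_, rfl, rfl⟩
      · rw [mkL]
        exact List.mem_cons_of_mem _ (List.mem_of_mem_head? (by rw [hx]; rfl))

theorem sal_same {V : Type*} [LinearOrder V] (M : Finset (Finset V)) :
    ∀ (l : List (V × Option V × Finset V)) (p), List.Chain (SALEdge M) p l →
      ∀ q ∈ l, q.2.2 = p.2.2
  | [], _, _ => by simp
  | q :: l, p, hch => by
      simp only [List.Chain, List.isChain_cons_cons] at hch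
      intro r hr
      rcases List.mem_cons.mp hr with rfl | hr
      · exact hch.1.2.2.2
      · rw [sal_same M l q hch.2 r hr, hch.1.2.2.2]

theorem stmt13 {V : Type*} [Fintype V] [LinearOrder V] (M : Finset (Finset V))
    (hne : ∀ m ∈ M, m ≠ ∅)
    (hanti : ∀ m ∈ M, ∀ m' ∈ M, m ⊆ m' → m = m') :
    (∀ l : List (V × Option V × Finset V), l ≠ [] →
        (∀ p ∈ l, SALNode M p) → l.Chain' (SALEdge M) →
        (l.map Prod.fst).Pairwise (· < ·) ∧ (l.map Prod.fst).toFinset ∈ genComplex M) ∧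
    (∀ σ : Finset V, σ ∈ genComplex M →
        ∃ l : List (V × Option V × Finset V), l ≠ [] ∧
          (∀ p ∈ l, SALNode M p) ∧ l.Chain' (SALEdge M) ∧
          l.map Prod.fst = σ.sort (· ≤ ·)) := by
  constructor
  · intro l hl hnode hch
    have hsorted : (l.map Prod.fst).Pairwise (· < ·) := by
      rw [← List.isChain_iff_pairwise, List.isChain_map]
      refine List.IsChain.imp ?_ hch
      rintro p q ⟨hp, hq, hpq, -⟩
      have := hp.2.2
      rw [hpq] at this
      exact this.2
    refine ⟨hsorted, ?_, ?_⟩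
    · simp only [ne_eq, ← Finset.not_nonempty_iff_eq_empty, not_not]
      obtain ⟨p, ps, rfl⟩ := List.exists_cons_of_ne_nil hl
      exact ⟨p.1, by simp⟩
    · obtain ⟨p, ps, rfl⟩ := List.exists_cons_of_ne_nil hl
      have hp := hnode p (by simp)
      refine ⟨p.2.2, hp.1, ?_⟩
      intro a ha
      simp only [List.mem_toFinset, List.map_cons, List.mem_cons, List.mem_map] at ha
      rcases ha with rfl | ⟨q, hq, rfl⟩
      · exact hp.2.1
      · have := (hnode q (List.mem_cons_of_mem _ hq)).2.1
        rwa [sal_same M ps p hch q hq] at this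
  · intro σ hσ
    obtain ⟨hσne, m, hmM, hσm⟩ := hσ
    have hmne : m.Nonempty := Finset.nonempty_of_ne_empty (hne m hmM)
    set b := m.max' hmne with hb
    set s := σ.sort (· ≤ ·) with hs
    have hsne : s ≠ [] := by
      obtain ⟨x, hx⟩ := Finset.nonempty_of_ne_empty hσne
      intro h0
      have : x ∈ s := by rw [hs, Finset.mem_sort]; exact hx
      rw [h0] at this
      exact List.not_mem_nil this
    have hsmem : ∀ a ∈ s, a ∈ m := fun a ha => hσm (by rwa [hs, Finset.mem_sort] at ha)
    have hschain : s.Chain' (· < ·) := by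
      rw [List.Chain', List.isChain_iff_pairwise]
      exact List.sortedLT_iff_pairwise.mp σ.sortedLT_sort
    classical
    set t : Option V := if ∃ a, s.getLast? = some a ∧ a < b then some b else none with ht
    have hlastnode : ∀ a, s.getLast? = some a → SALNode M (a, t, m) := by
      intro a ha
      have ham : a ∈ m := by
        refine hsmem a ?_
        obtain ⟨h, rfl⟩ := List.mem_getLast?_eq_getLast ha
        exact List.getLast_mem h
      refine ⟨hmM, ham, ?_⟩
      by_cases hab : a < b
      · have hts : t = some b := by rw [ht, if_pos ⟨a, ha, hab⟩]
        rw [hts]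
        exact ⟨m.max'_mem hmne, hab⟩
      · have hts : t = none := by
          rw [ht, if_neg]
          rintro ⟨a', ha', hab'⟩
          rw [ha] at ha'
          cases Option.some_injective _ ha'
          exact hab hab'
        rw [hts]
        intro x hx
        exact le_trans (m.le_max' x hx) (not_lt.mp hab)
    have hnodes := mkL_node M m t hmM s hschain hsmem hlastnode
    refine ⟨mkL m t s, ?_, hnodes, mkL_chain M m t s hnodes, mkL_map m t s⟩
    intro h
    apply hsne
    have := congrArg (List.map Prod.fst) h
    rwa [mkL_map] at this
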